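/- Let f: ℝⁿ → ℝ be differentiable with L-Lipschitz gradient, let g: ℝⁿ → ℝ be convex (e.g., g(a) = λ‖a‖₁), and let γ ∈ (0, 1/L]. If a⁺ = argmin_z { ⟨∇f(a), z - a⟩ + (1/(2γ))‖z - a‖₂² + g(z) }, then f(a⁺) + g(a⁺) - (f(a) + g(a)) ≤ -(1/(2γ))‖a⁺ - a‖₂². -/

import Mathlib

open scoped RealInnerProductSpace

theorem descent_aux (n : ℕ) (f : EuclideanSpace ℝ (Fin n) → ℝ)
    (f' : EuclideanSpace ℝ (Fin n) → EuclideanSpace ℝ (Fin n))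
    (hf : ∀ z, HasGradientAt f (f' z) z) (L : ℝ) (hL : 0 < L)
    (hLip : ∀ z₁ z₂, ‖f' z₁ - f' z₂‖ ≤ L * ‖z₁ - z₂‖)
    (x y : EuclideanSpace ℝ (Fin n)) :
    f y ≤ f x + ⟪f' x, y - x⟫ + L / 2 * ‖y - x‖ ^ 2 := by
  set d := y - x with hd
  have hcont : Continuous f' := by
    have : LipschitzWith L.toNNReal f' := by
      intro z₁ z₂
      rw [edist_dist, edist_dist, dist_eq_norm]
      have := hLip z₁ z₂
      rw [← ENNReal.ofReal_coe_nnreal]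
      rw [← ENNReal.ofReal_mul (by positivity)]
      apply ENNReal.ofReal_le_ofReal
      simpa [Real.coe_toNNReal L hL.le, dist_eq_norm] using this
    exact this.continuous
  have hcurve : ∀ t : ℝ, HasDerivAt (fun t : ℝ => x + t • d) d t := by
    intro t
    simpa using ((hasDerivAt_id t).smul_const d).const_add x
  have hderiv : ∀ t : ℝ, HasDerivAt (fun t : ℝ => f (x + t • d))
      ⟪f' (x + t • d), d⟫ t := by
    intro t
    have h2 := ((hf (x + t • d)).hasFDerivAt).comp_hasDerivAt t (hcurve t)
    simpa [Function.comp_def] using h2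
  have hφcont : Continuous fun t : ℝ => ⟪f' (x + t • d), d⟫ := by
    apply Continuous.inner
    · exact hcont.comp (by continuity)
    · exact continuous_const
  have hint : ∫ t in (0:ℝ)..1, ⟪f' (x + t • d), d⟫ = f y - f x := by
    rw [intervalIntegral.integral_eq_sub_of_hasDerivAt
      (fun t _ => hderiv t) (hφcont.intervalIntegrable 0 1)]
    simp [hd]
  have hbound : ∀ t ∈ Set.Icc (0:ℝ) 1,
      ⟪f' (x + t • d), d⟫ ≤ ⟪f' x, d⟫ + L * t * ‖d‖ ^ 2 := by
    intro t ht
    have h1 : ⟪f' (x + t • d) - f' x, d⟫ ≤ ‖f' (x + t • d) - f' x‖ * ‖d‖ :=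
      real_inner_le_norm _ _
    have h2 : ‖f' (x + t • d) - f' x‖ ≤ L * (t * ‖d‖) := by
      have := hLip (x + t • d) x
      simpa [norm_smul, abs_of_nonneg ht.1] using this
    have h3 : ⟪f' (x + t • d) - f' x, d⟫ = ⟪f' (x + t • d), d⟫ - ⟪f' x, d⟫ := by
      rw [inner_sub_left]
    nlinarith [norm_nonneg d, norm_nonneg (f' (x + t • d) - f' x),
      mul_le_mul_of_nonneg_right h2 (norm_nonneg d)]
  have hineq : f y - f x ≤ ⟪f' x, d⟫ + L / 2 * ‖d‖ ^ 2 := by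
    rw [← hint]
    calc ∫ t in (0:ℝ)..1, ⟪f' (x + t • d), d⟫
        ≤ ∫ t in (0:ℝ)..1, (⟪f' x, d⟫ + L * t * ‖d‖ ^ 2) :=
          intervalIntegral.integral_mono_on zero_le_one
            (hφcont.intervalIntegrable 0 1)
            (((by fun_prop : Continuous fun t : ℝ => ⟪f' x, d⟫ + L * t * ‖d‖ ^ 2)).intervalIntegrable 0 1) hbound
      _ = ⟪f' x, d⟫ + L / 2 * ‖d‖ ^ 2 := by
          rw [intervalIntegral.integral_add intervalIntegrable_const
            (((by fun_prop : Continuous fun t : ℝ => L * t * ‖d‖ ^ 2)).intervalIntegrable 0 1)]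
          have h4 : (fun t : ℝ => L * t * ‖d‖ ^ 2) = fun t : ℝ => (L * ‖d‖ ^ 2) * t := by
            funext t; ring
          rw [h4, intervalIntegral.integral_const_mul, integral_id]
          norm_num; ring
  linarith

/-- Sufficient decrease of the proximal-gradient (ISTA) step: if `f` has `L`-Lipschitz
gradient, `g` is convex, `γ ∈ (0, 1/L]`, and `a⁺` minimizes
`z ↦ ⟨∇f(a), z - a⟩ + (1/(2γ))‖z - a‖² + g(z)`, then
`f(a⁺) + g(a⁺) - (f(a) + g(a)) ≤ -(1/(2γ))‖a⁺ - a‖²`. -/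
theorem ista_sufficient_decrease (n : ℕ)
    (f g : EuclideanSpace ℝ (Fin n) → ℝ)
    (f' : EuclideanSpace ℝ (Fin n) → EuclideanSpace ℝ (Fin n))
    (hf : ∀ z, HasGradientAt f (f' z) z)
    (L : ℝ) (hL : 0 < L)
    (hLip : ∀ z₁ z₂, ‖f' z₁ - f' z₂‖ ≤ L * ‖z₁ - z₂‖)
    (hg : ConvexOn ℝ Set.univ g)
    (γ : ℝ) (hγ : 0 < γ) (hγL : γ ≤ 1 / L)
    (a aplus : EuclideanSpace ℝ (Fin n))
    (hmin : ∀ z, ⟪f' a, aplus - a⟫ + (1/(2*γ)) * ‖aplus - a‖^2 + g aplus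
      ≤ ⟪f' a, z - a⟫ + (1/(2*γ)) * ‖z - a‖^2 + g z) :
    f aplus + g aplus - (f a + g a) ≤ -(1/(2*γ)) * ‖aplus - a‖^2 := by
  set d := aplus - a with hd
  set κ := 1/(2*γ) with hκ
  have hκpos : 0 < κ := by rw [hκ]; positivity
  have hB : (0:ℝ) ≤ ‖d‖^2 := by positivity
  have hstep : ∀ t : ℝ, 0 < t → t < 1 →
      ⟪f' a, d⟫ + 2*κ*‖d‖^2 + g aplus ≤ g a + t*(κ*‖d‖^2) := by
    intro t ht0 ht1
    set z := (1-t) • aplus + t • a with hz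
    have hza : z - a = (1-t) • d := by rw [hz, hd]; module
    have hgz : g z ≤ (1-t) * g aplus + t * g a :=
      hg.2 (Set.mem_univ aplus) (Set.mem_univ a) (by linarith) ht0.le (by ring)
    have h1 := hmin z
    rw [hza] at h1
    have h2 : ⟪f' a, (1-t) • d⟫ = (1-t) * ⟪f' a, d⟫ := real_inner_smul_right _ _ _
    have h3 : ‖(1-t) • d‖^2 = (1-t)^2 * ‖d‖^2 := by
      rw [norm_smul, Real.norm_eq_abs, abs_of_nonneg (by linarith : (0:ℝ) ≤ 1 - t)]; ring
    rw [h2, h3] at h1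
    have h6 : t * (⟪f' a, d⟫ + (2-t)*κ*‖d‖^2 + g aplus - g a) ≤ 0 := by nlinarith [h1, hgz]
    have h7 : ⟪f' a, d⟫ + (2-t)*κ*‖d‖^2 + g aplus - g a ≤ 0 := by nlinarith [h6, ht0]
    nlinarith [h7]
  have hkey : ⟪f' a, d⟫ + 2*κ*‖d‖^2 + g aplus ≤ g a := by
    apply le_of_forall_pos_le_add
    intro ε hε
    set M := κ*‖d‖^2 with hM
    have hM0 : 0 ≤ M := by positivity
    set t := min (1/2) (ε / (M+1)) with ht
    have ht0 : 0 < t := lt_min (by norm_num) (by positivity)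
    have ht1 : t < 1 := lt_of_le_of_lt (min_le_left _ _) (by norm_num)
    have hs := hstep t ht0 ht1
    have htM : t * M ≤ ε := by
      calc t * M ≤ (ε / (M+1)) * M :=
            mul_le_mul_of_nonneg_right (min_le_right _ _) hM0
        _ ≤ ε := by rw [div_mul_eq_mul_div, div_le_iff₀ (by positivity)]; nlinarith
    linarith
  have hdesc := descent_aux n f f' hf L hL hLip a aplus
  rw [← hd] at hdesc
  have hγL2 : L * γ ≤ 1 := by
    rw [le_div_iff₀ hL] at hγL; linarith
  have hhalf : L / 2 ≤ κ := by
    rw [hκ, le_div_iff₀ (by positivity)]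
    nlinarith
  nlinarith [hdesc, hkey, hB, mul_le_mul_of_nonneg_right hhalf hB]
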